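/- Soundness and strong completeness of SLEA over all frames: for every set Γ of LEA-formulas and every LEA-formula φ, the formula φ is derivable from Γ in SLEA if and only if φ is a semantic consequence of Γ over the class of all models (i.e., for every model M and world s, if M,s ⊨ γ for all γ ∈ Γ, then M,s ⊨ φ). -/

import Mathlib

/-- The language LEA of essence and accident. -/
inductive LEAForm : Type
  | atom : ℕ → LEAForm
  | neg : LEAForm → LEAForm
  | and : LEAForm → LEAForm → LEAForm
  | ess : LEAForm → LEAForm

/-- A Kripke model (the frame is (W, R)). -/
structure Model (W : Type) where
  R : W → W → Prop
  V : ℕ → W → Prop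

/-- Satisfaction for LEA. -/
def satLEA {W : Type} (M : Model W) : W → LEAForm → Prop
  | w, .atom p => M.V p w
  | w, .neg φ => ¬ satLEA M w φ
  | w, .and φ ψ => satLEA M w φ ∧ satLEA M w ψ
  | w, .ess φ => satLEA M w φ → ∀ v, M.R w v → satLEA M v φ

/-- Implication, defined as usual. -/
def impF (φ ψ : LEAForm) : LEAForm := .neg (.and φ (.neg ψ))
/-- ⊤, defined as usual. -/
def topL : LEAForm := .neg (.and (.atom 0) (.neg (.atom 0)))

/-- Uniform substitution of formulas for propositional variables. -/
def substL (σ : ℕ → LEAForm) : LEAForm → LEAForm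
  | .atom p => σ p
  | .neg φ => .neg (substL σ φ)
  | .and φ ψ => .and (substL σ φ) (substL σ ψ)
  | .ess φ => .ess (substL σ φ)

/-- φ is a propositional tautology: it evaluates to true under every boolean
valuation of LEA-formulas that respects negation and conjunction. -/
def isTaut (φ : LEAForm) : Prop :=
  ∀ v : LEAForm → Bool,
    (∀ ψ, v (.neg ψ) = !(v ψ)) →
    (∀ ψ χ, v (.and ψ χ) = (v ψ && v χ)) →
    v φ = true

/-- Theorems of the system SLEA (optionally extended by the axioms in
`extra`): all propositional tautologies, the axioms ∘⊤, ¬p → ∘p and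
(∘p ∧ ∘q) → ∘(p∧q), closed under uniform substitution, modus ponens, and
the rule R: from φ → ψ infer (∘φ ∧ φ) → ∘ψ. -/
inductive SLEAthm (extra : Set LEAForm) : LEAForm → Prop
  | taut {φ} : isTaut φ → SLEAthm extra φ
  | axTop : SLEAthm extra (.ess topL)
  | axEqui : SLEAthm extra (impF (.neg (.atom 0)) (.ess (.atom 0)))
  | axCon : SLEAthm extra
      (impF (.and (.ess (.atom 0)) (.ess (.atom 1)))
        (.ess (.and (.atom 0) (.atom 1))))
  | axExtra {φ} : φ ∈ extra → SLEAthm extra φ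
  | sub {φ} (σ : ℕ → LEAForm) : SLEAthm extra φ → SLEAthm extra (substL σ φ)
  | mp {φ ψ} : SLEAthm extra (impF φ ψ) → SLEAthm extra φ → SLEAthm extra ψ
  | ruleR {φ ψ} : SLEAthm extra (impF φ ψ) →
      SLEAthm extra (impF (.and (.ess φ) φ) (.ess ψ))

/-- Derivability of φ from a set Γ of premises in SLEA (+ `extra`). -/
inductive SLEAderiv (extra : Set LEAForm) (Γ : Set LEAForm) : LEAForm → Prop
  | thm {φ} : SLEAthm extra φ → SLEAderiv extra Γ φ
  | hyp {φ} : φ ∈ Γ → SLEAderiv extra Γ φ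
  | mp {φ ψ} : SLEAderiv extra Γ (impF φ ψ) → SLEAderiv extra Γ φ →
      SLEAderiv extra Γ ψ
----------------------------------------------------------------
-- auxiliary development
----------------------------------------------------------------
namespace LEAaux

open LEAForm

def botL : LEAForm := .and (.atom 0) (.neg (.atom 0))

-- tautologies
lemma tK (φ ψ : LEAForm) : isTaut (impF ψ (impF φ ψ)) := by
  intro v hn ha
  simp only [impF, hn, ha]
  cases v ψ <;> cases v φ <;> rfl

lemma tS (φ χ ψ : LEAForm) :
    isTaut (impF (impF φ (impF χ ψ)) (impF (impF φ χ) (impF φ ψ))) := by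
  intro v hn ha
  simp only [impF, hn, ha]
  cases v φ <;> cases v χ <;> cases v ψ <;> rfl

lemma tI (φ : LEAForm) : isTaut (impF φ φ) := by
  intro v hn ha
  simp only [impF, hn, ha]
  cases v φ <;> rfl

lemma tDneg (φ : LEAForm) : isTaut (impF (impF φ botL) (.neg φ)) := by
  intro v hn ha
  simp only [impF, botL, hn, ha]
  cases v φ <;> cases v (.atom 0) <;> rfl

lemma tExpl (φ : LEAForm) : isTaut (impF φ (impF (.neg φ) botL)) := by
  intro v hn ha
  simp only [impF, botL, hn, ha]
  cases v φ <;> cases v (.atom 0) <;> rfl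

lemma tDN2 (φ : LEAForm) : isTaut (impF (impF (.neg φ) botL) φ) := by
  intro v hn ha
  simp only [impF, botL, hn, ha]
  cases v φ <;> cases v (.atom 0) <;> rfl

lemma tAndI (φ ψ : LEAForm) : isTaut (impF φ (impF ψ (.and φ ψ))) := by
  intro v hn ha
  simp only [impF, hn, ha]
  cases v φ <;> cases v ψ <;> rfl

lemma tAndE1 (φ ψ : LEAForm) : isTaut (impF (.and φ ψ) φ) := by
  intro v hn ha
  simp only [impF, hn, ha]
  cases v φ <;> cases v ψ <;> rfl

lemma tAndE2 (φ ψ : LEAForm) : isTaut (impF (.and φ ψ) ψ) := by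
  intro v hn ha
  simp only [impF, hn, ha]
  cases v φ <;> cases v ψ <;> rfl

lemma tTop : isTaut topL := by
  intro v hn ha
  simp only [topL, hn, ha]
  cases v (.atom 0) <;> rfl

lemma tCurry (C a φ : LEAForm) :
    isTaut (impF (impF C (impF a φ)) (impF (.and a C) φ)) := by
  intro v hn ha
  simp only [impF, hn, ha]
  cases v C <;> cases v a <;> cases v φ <;> rfl

abbrev Der (Γ : Set LEAForm) (φ : LEAForm) : Prop := SLEAderiv ∅ Γ φ

lemma derTaut {Γ} {φ} (h : isTaut φ) : Der Γ φ := .thm (.taut h)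

lemma deduction {Γ : Set LEAForm} {φ ψ : LEAForm}
    (h : Der (insert φ Γ) ψ) : Der Γ (impF φ ψ) := by
  induction h with
  | thm h => exact .mp (derTaut (tK φ _)) (.thm h)
  | hyp h =>
    rcases h with h | h
    · subst h; exact derTaut (tI _)
    · exact .mp (derTaut (tK φ _)) (.hyp h)
  | mp _ _ ih1 ih2 => exact .mp (.mp (derTaut (tS _ _ _)) ih1) ih2

lemma derMono {Γ Γ' : Set LEAForm} {φ} (hs : Γ ⊆ Γ') (h : Der Γ φ) :
    Der Γ' φ := by
  induction h with
  | thm h => exact .thm h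
  | hyp h => exact .hyp (hs h)
  | mp _ _ ih1 ih2 => exact .mp ih1 ih2

lemma finitary {Γ : Set LEAForm} {φ} (h : Der Γ φ) :
    ∃ F : Finset LEAForm, ↑F ⊆ Γ ∧ Der ↑F φ := by
  induction h with
  | thm h => exact ⟨∅, by simp, .thm h⟩
  | hyp h => exact ⟨{_}, by simpa, .hyp (by simp)⟩
  | @mp φ ψ _ _ ih1 ih2 =>
    classical
    obtain ⟨F1, hF1, h1⟩ := ih1
    obtain ⟨F2, hF2, h2⟩ := ih2
    refine ⟨F1 ∪ F2, by simp [Set.union_subset_iff, hF1, hF2], ?_⟩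
    exact .mp (derMono (by simp [Set.subset_def]; tauto) h1)
      (derMono (by simp [Set.subset_def]; tauto) h2)

def Con (Γ : Set LEAForm) : Prop := ¬ Der Γ botL

def MCS (Δ : Set LEAForm) : Prop :=
  Con Δ ∧ ∀ φ : LEAForm, φ ∈ Δ ∨ .neg φ ∈ Δ

lemma mcs_closed {Δ : Set LEAForm} (hΔ : MCS Δ) {φ} (h : Der Δ φ) :
    φ ∈ Δ := by
  rcases hΔ.2 φ with hm | hm
  · exact hm
  · exact absurd (.mp (.mp (derTaut (tExpl φ)) h) (.hyp hm)) hΔ.1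

lemma mcs_thm {Δ : Set LEAForm} (hΔ : MCS Δ) {φ} (h : SLEAthm ∅ φ) :
    φ ∈ Δ := mcs_closed hΔ (.thm h)

lemma mcs_neg_iff {Δ : Set LEAForm} (hΔ : MCS Δ) {φ} :
    LEAForm.neg φ ∈ Δ ↔ φ ∉ Δ := by
  constructor
  · intro hn hφ
    exact hΔ.1 (.mp (.mp (derTaut (tExpl φ)) (.hyp hφ)) (.hyp hn))
  · intro hφ
    rcases hΔ.2 φ with h | h
    · exact absurd h hφ
    · exact h

lemma mcs_mp {Δ : Set LEAForm} (hΔ : MCS Δ) {φ ψ}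
    (h1 : impF φ ψ ∈ Δ) (h2 : φ ∈ Δ) : ψ ∈ Δ :=
  mcs_closed hΔ (.mp (.hyp h1) (.hyp h2))

lemma mcs_and {Δ : Set LEAForm} (hΔ : MCS Δ) {φ ψ}
    (h1 : φ ∈ Δ) (h2 : ψ ∈ Δ) : LEAForm.and φ ψ ∈ Δ :=
  mcs_closed hΔ (.mp (.mp (derTaut (tAndI φ ψ)) (.hyp h1)) (.hyp h2))

lemma mcs_and_left {Δ : Set LEAForm} (hΔ : MCS Δ) {φ ψ}
    (h : LEAForm.and φ ψ ∈ Δ) : φ ∈ Δ :=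
  mcs_closed hΔ (.mp (derTaut (tAndE1 φ ψ)) (.hyp h))

lemma mcs_and_right {Δ : Set LEAForm} (hΔ : MCS Δ) {φ ψ}
    (h : LEAForm.and φ ψ ∈ Δ) : ψ ∈ Δ :=
  mcs_closed hΔ (.mp (derTaut (tAndE2 φ ψ)) (.hyp h))

lemma con_insert_neg {Γ : Set LEAForm} {φ}
    (h : ¬ Der Γ φ) : Con (insert (.neg φ) Γ) := by
  intro hbot
  exact h (.mp (derTaut (tDN2 φ)) (deduction hbot))

/-- a finite subset of the union of a nonempty chain sits inside a member -/
lemma finset_subset_chain {c : Set (Set LEAForm)} (hchain : IsChain (· ⊆ ·) c)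
    (hne : c.Nonempty) (F : Finset LEAForm) (hF : ↑F ⊆ ⋃₀ c) :
    ∃ t ∈ c, ↑F ⊆ t := by
  classical
  induction F using Finset.induction_on with
  | empty => exact ⟨hne.choose, hne.choose_spec, by simp⟩
  | @insert a F ha ih =>
    obtain ⟨t, htc, htF⟩ := ih (by
      refine subset_trans ?_ hF
      simp [Set.subset_def]; tauto)
    have haU : a ∈ ⋃₀ c := hF (by simp)
    obtain ⟨s, hsc, has⟩ := haU
    rcases eq_or_ne s t with rfl | hst
    · exact ⟨s, hsc, by simp [Set.insert_subset_iff, has, htF]⟩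
    · rcases hchain hsc htc hst with h | h
      · exact ⟨t, htc, by simp [Set.insert_subset_iff, h has, htF]⟩
      · exact ⟨s, hsc, by
          rw [Finset.coe_insert]
          exact Set.insert_subset has (subset_trans htF h)⟩

lemma lindenbaum {Γ : Set LEAForm} (h : Con Γ) :
    ∃ Δ, Γ ⊆ Δ ∧ MCS Δ := by
  obtain ⟨m, hΓm, hm⟩ := zorn_subset_nonempty {Δ : Set LEAForm | Con Δ}
    (fun c hcS hchain hne => by
      refine ⟨⋃₀ c, ?_, fun s hs => Set.subset_sUnion_of_mem hs⟩
      intro hbot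
      obtain ⟨F, hF, hFd⟩ := finitary hbot
      obtain ⟨t, htc, htF⟩ := finset_subset_chain hchain hne F hF
      exact hcS htc (derMono htF hFd)) Γ h
  refine ⟨m, hΓm, hm.1, fun φ => ?_⟩
  by_contra hcon
  push_neg at hcon
  obtain ⟨h1, h2⟩ := hcon
  have key : ∀ ψ : LEAForm, ψ ∉ m → Der m (impF ψ botL) := by
    intro ψ hψ
    have : ¬ Con (insert ψ m) := by
      intro hc
      exact hψ (hm.2 hc (Set.subset_insert _ _) (Set.mem_insert _ _))
    rw [Con, not_not] at this
    exact deduction this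
  have hnφ : Der m (.neg φ) := .mp (derTaut (tDneg φ)) (key φ h1)
  exact hm.1 (.mp (key _ h2) hnφ)

def conjL : List LEAForm → LEAForm
  | [] => topL
  | a :: l => .and a (conjL l)

lemma der_empty_thm {φ} (h : Der ∅ φ) : SLEAthm ∅ φ := by
  induction h with
  | thm h => exact h
  | hyp h => exact absurd h (by simp)
  | mp _ _ ih1 ih2 => exact .mp ih1 ih2

lemma conj_imp {φ : LEAForm} :
    ∀ L : List LEAForm, Der {ψ | ψ ∈ L} φ → Der ∅ (impF (conjL L) φ) := by
  intro L
  induction L generalizing φ with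
  | nil =>
    intro h
    have : Der (∅ : Set LEAForm) φ := by
      have : ({ψ | ψ ∈ ([] : List LEAForm)} : Set LEAForm) = ∅ := by simp
      rwa [this] at h
    exact .mp (derTaut (tK topL φ)) this
  | cons a L ih =>
    intro h
    have h' : Der (insert a {ψ | ψ ∈ L}) φ := by
      apply derMono _ h
      intro x hx
      simp at hx ⊢
      tauto
    have h2 := ih (deduction h')
    exact .mp (derTaut (tCurry (conjL L) a φ)) h2

lemma mcs_conj_mem {Δ : Set LEAForm} (hΔ : MCS Δ) :
    ∀ L : List LEAForm, (∀ ψ ∈ L, ψ ∈ Δ) → conjL L ∈ Δ := by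
  intro L
  induction L with
  | nil => exact fun _ => mcs_thm hΔ (.taut tTop)
  | cons a L ih =>
    intro h
    exact mcs_and hΔ (h a (by simp)) (ih fun ψ hψ => h ψ (by simp [hψ]))

/-- from ∘ψ for each ψ in L, get ∘(⋀L) in an MCS. -/
lemma mcs_ess_conj {Δ : Set LEAForm} (hΔ : MCS Δ) :
    ∀ L : List LEAForm, (∀ ψ ∈ L, LEAForm.ess ψ ∈ Δ) →
      LEAForm.ess (conjL L) ∈ Δ := by
  intro L
  induction L with
  | nil => exact fun _ => mcs_thm hΔ .axTop
  | cons a L ih =>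
    intro h
    have h1 : LEAForm.ess a ∈ Δ := h a (by simp)
    have h2 : LEAForm.ess (conjL L) ∈ Δ := ih fun ψ hψ => h ψ (by simp [hψ])
    have hthm : SLEAthm ∅ (impF (.and (.ess a) (.ess (conjL L)))
        (.ess (.and a (conjL L)))) := by
      have := SLEAthm.sub (extra := ∅)
        (fun n => if n = 0 then a else conjL L) SLEAthm.axCon
      simpa [substL, impF] using this
    exact mcs_mp hΔ (mcs_thm hΔ hthm) (mcs_and hΔ h1 h2)

/-- key existence lemma for the truth lemma. -/
lemma ess_witness {Δ : Set LEAForm} (hΔ : MCS Δ) {φ : LEAForm}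
    (h : LEAForm.ess φ ∉ Δ) :
    φ ∈ Δ ∧ ∃ Θ, MCS Θ ∧ (∀ ψ, LEAForm.ess ψ ∈ Δ → ψ ∈ Δ → ψ ∈ Θ) ∧
      φ ∉ Θ := by
  have hφΔ : φ ∈ Δ := by
    by_contra hφ
    have hn : LEAForm.neg φ ∈ Δ := (mcs_neg_iff hΔ).2 hφ
    have hthm : SLEAthm ∅ (impF (.neg φ) (.ess φ)) := by
      have := SLEAthm.sub (extra := ∅) (fun _ => φ) SLEAthm.axEqui
      simpa [substL, impF] using this
    exact h (mcs_mp hΔ (mcs_thm hΔ hthm) hn)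
  refine ⟨hφΔ, ?_⟩
  set E : Set LEAForm := {ψ | LEAForm.ess ψ ∈ Δ ∧ ψ ∈ Δ} with hE
  have hcon : Con (insert (.neg φ) E) := by
    apply con_insert_neg
    intro hEφ
    obtain ⟨F, hFE, hFd⟩ := finitary hEφ
    classical
    have hLmem : ∀ ψ ∈ F.toList, ψ ∈ E := by
      intro ψ hψ
      exact hFE (by simpa using hψ)
    have hFd' : Der {ψ | ψ ∈ F.toList} φ := by
      apply derMono _ hFd
      intro x hx
      simpa using hx
    have himp := conj_imp F.toList hFd'
    have hthm := der_empty_thm himp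
    have hR := SLEAthm.ruleR (extra := ∅) hthm
    have hessC : LEAForm.ess (conjL F.toList) ∈ Δ :=
      mcs_ess_conj hΔ _ (fun ψ hψ => (hLmem ψ hψ).1)
    have hC : conjL F.toList ∈ Δ :=
      mcs_conj_mem hΔ _ (fun ψ hψ => (hLmem ψ hψ).2)
    exact h (mcs_mp hΔ (mcs_thm hΔ hR) (mcs_and hΔ hessC hC))
  obtain ⟨Θ, hsub, hΘ⟩ := lindenbaum hcon
  refine ⟨Θ, hΘ, ?_, ?_⟩
  · intro ψ h1 h2
    exact hsub (Set.mem_insert_of_mem _ ⟨h1, h2⟩)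
  · intro hφΘ
    exact (mcs_neg_iff hΘ).1 (hsub (Set.mem_insert _ _)) hφΘ

/-- the canonical model -/
def canW : Type := {Δ : Set LEAForm // MCS Δ}

def canM : Model canW where
  R Δ Θ := ∀ ψ, LEAForm.ess ψ ∈ Δ.1 → ψ ∈ Δ.1 → ψ ∈ Θ.1
  V p Δ := LEAForm.atom p ∈ Δ.1

lemma truth_lemma (φ : LEAForm) (Δ : canW) :
    satLEA canM Δ φ ↔ φ ∈ Δ.1 := by
  induction φ generalizing Δ with
  | atom p => simp [satLEA, canM]
  | neg ψ ih => simp [satLEA, ih, mcs_neg_iff Δ.2]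
  | and ψ χ ih1 ih2 =>
    simp only [satLEA, ih1, ih2]
    exact ⟨fun ⟨h1, h2⟩ => mcs_and Δ.2 h1 h2,
      fun h => ⟨mcs_and_left Δ.2 h, mcs_and_right Δ.2 h⟩⟩
  | ess ψ ih =>
    constructor
    · intro hsat
      by_contra hmem
      obtain ⟨hψΔ, Θ, hΘ, hR, hψΘ⟩ := ess_witness Δ.2 hmem
      have := hsat ((ih Δ).2 hψΔ) ⟨Θ, hΘ⟩ hR
      exact hψΘ ((ih ⟨Θ, hΘ⟩).1 this)
    · intro hmem hsatψ Θ hR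
      exact (ih Θ).2 (hR ψ hmem ((ih Δ).1 hsatψ))

----------------------------------------------------------------
-- soundness
----------------------------------------------------------------

lemma sat_impF {W} {M : Model W} {s : W} {φ ψ} :
    satLEA M s (impF φ ψ) ↔ (satLEA M s φ → satLEA M s ψ) := by
  simp [impF, satLEA]

lemma sat_subst {W} (M : Model W) (σ : ℕ → LEAForm) (φ : LEAForm) :
    ∀ w, satLEA M w (substL σ φ) ↔
      satLEA ⟨M.R, fun p v => satLEA M v (σ p)⟩ w φ := by
  induction φ with
  | atom p => intro w; simp [substL, satLEA]
  | neg ψ ih => intro w; simp [substL, satLEA, ih]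
  | and ψ χ ih1 ih2 => intro w; simp [substL, satLEA, ih1, ih2]
  | ess ψ ih => intro w; simp [substL, satLEA, ih]

lemma thm_sound {φ} (h : SLEAthm ∅ φ) :
    ∀ (W : Type) (M : Model W) (s : W), satLEA M s φ := by
  induction h with
  | @taut φ h =>
    intro W M s
    classical
    have := h (fun ψ => decide (satLEA M s ψ)) (fun ψ => Bool.eq_iff_iff.2 (decide_eq_true_iff.trans (by simp [satLEA])))
      (fun ψ χ => Bool.eq_iff_iff.2 (decide_eq_true_iff.trans (by simp [satLEA])))
    exact of_decide_eq_true this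
  | axTop =>
    intro W M s
    intro _ v _
    simp [satLEA, topL]
  | axEqui =>
    intro W M s
    rw [sat_impF]
    intro h1 h2 v hR
    simp [satLEA] at h1
    exact absurd h2 h1
  | axCon =>
    intro W M s
    rw [sat_impF]
    intro h1 h2 v hR
    obtain ⟨ha, hb⟩ := h1
    obtain ⟨ha', hb'⟩ := h2
    exact ⟨ha ha' v hR, hb hb' v hR⟩
  | axExtra h => exact absurd h (by simp)
  | sub σ _ ih =>
    intro W M s
    rw [sat_subst]
    exact ih W _ s
  | mp _ _ ih1 ih2 =>
    intro W M s
    exact (sat_impF.1 (ih1 W M s)) (ih2 W M s)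
  | @ruleR φ ψ _ ih =>
    intro W M s
    rw [sat_impF]
    intro ⟨hess, hφ⟩ _ v hR
    exact (sat_impF.1 (ih W M v)) (hess hφ v hR)

end LEAaux

/-- Soundness and strong completeness of SLEA with respect to the class of
all frames: Γ ⊢ φ in SLEA iff φ is a semantic consequence of Γ over all
models. -/
theorem stmt18 (Γ : Set LEAForm) (φ : LEAForm) :
    SLEAderiv ∅ Γ φ ↔
      ∀ (W : Type) [Nonempty W] (M : Model W) (s : W),
        (∀ γ ∈ Γ, satLEA M s γ) → satLEA M s φ := by
  open LEAaux in
  constructor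
  · intro h
    induction h with
    | thm h => intro W _ M s _; exact thm_sound h W M s
    | hyp h => intro W _ M s hΓ; exact hΓ _ h
    | mp _ _ ih1 ih2 =>
      intro W _ M s hΓ
      exact (sat_impF.1 (ih1 W M s hΓ)) (ih2 W M s hΓ)
  · intro hsem
    by_contra hd
    obtain ⟨Δ, hsub, hΔ⟩ := lindenbaum (con_insert_neg hd)
    have : Nonempty canW := ⟨⟨Δ, hΔ⟩⟩
    have hφ := hsem canW canM ⟨Δ, hΔ⟩ (fun γ hγ =>
      (truth_lemma γ ⟨Δ, hΔ⟩).2 (hsub (Set.mem_insert_of_mem _ hγ)))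
    have hmem : φ ∈ Δ := (truth_lemma φ ⟨Δ, hΔ⟩).1 hφ
    exact (mcs_neg_iff hΔ).1 (hsub (Set.mem_insert _ _)) hmem
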